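/- The Fibonacci word contains no factor that is a β-power for β = (5+√5)/2; i.e., it contains no factor w with period p and |w| ≥ ⌈β·p⌉. -/

import Mathlib

/-- `u` is a factor (contiguous block) of the infinite word `x`. -/
def FactorOf {α : Type*} (u : List α) (x : ℕ → α) : Prop :=
  ∃ i, u = (List.range u.length).map fun t => x (i + t)

/-- Subword complexity: number of distinct length-`n` factors of `x`. -/
noncomputable def Complexity {α : Type*} (x : ℕ → α) (n : ℕ) : ℕ :=
  Set.ncard {u : List α | u.length = n ∧ FactorOf u x}

/-- A Sturmian word: infinite binary word with exactly `n+1` factors of each length `n`. -/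
def Sturmian (x : ℕ → Bool) : Prop := ∀ n, Complexity x n = n + 1

/-- A balanced binary word: counts of each letter in equal-length factors differ by at most 1. -/
def BalancedWord (w : List Bool) : Prop :=
  ∀ u v : List Bool, u <:+: w → v <:+: w → u.length = v.length →
    ∀ a : Bool, ((u.count a : ℤ) - (v.count a : ℤ)).natAbs ≤ 1

/-- The finite word `w` has period `p`: `w[i] = w[i+p]` for all valid `i`. -/
def HasPeriodL {α : Type*} (w : List α) (p : ℕ) : Prop :=
  ∀ i, i + p < w.length → w[i]? = w[i + p]?

/-- A cube of period `j ≥ 1` ends at position `n` of the infinite word `x`. -/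
def CubeEndAt {α : Type*} (x : ℕ → α) (n : ℕ) : Prop :=
  ∃ i j, 1 ≤ j ∧ i + 3 * j = n ∧ ∀ t < 2 * j, x (i + t) = x (i + j + t)

/-- A cube of period `j ≥ 1` ends at position `n` of the finite word `w`. -/
def CubeEnd (w : List Bool) (j n : ℕ) : Prop :=
  1 ≤ j ∧ n ≤ w.length ∧ ∃ i, i + 3 * j = n ∧ ∀ t < 2 * j, w[i + t]? = w[i + j + t]?


/-- The Fibonacci morphism `0 → 01`, `1 → 0`. -/
def fibMorph : Bool → List Bool
  | false => [false, true]
  | true => [false]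

/-- Iterates of the Fibonacci morphism on `0`. -/
def fibIter : ℕ → List Bool
  | 0 => [false]
  | n + 1 => (fibIter n).flatMap fibMorph

/-- The Fibonacci word, fixed point of `0 → 01`, `1 → 0` (each `fibIter n` is a
prefix of `fibIter (n+1)`, and `fibIter (n+1)` has length `> n`). -/
def fibWord (n : ℕ) : Bool := (fibIter (n + 1)).getD n false

noncomputable def ph : ℝ := (1 + Real.sqrt 5) / 2

lemma sqrt5_sq : Real.sqrt 5 ^ 2 = 5 := Real.sq_sqrt (by norm_num)
lemma sqrt5_lt : (2.2360679:ℝ) < Real.sqrt 5 ∧ Real.sqrt 5 < 2.23607 := by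
  constructor
  · nlinarith [Real.sq_sqrt (show (0:ℝ) ≤ 5 by norm_num), Real.sqrt_nonneg 5]
  · nlinarith [Real.sq_sqrt (show (0:ℝ) ≤ 5 by norm_num), Real.sqrt_nonneg 5]

lemma ph_sq : ph ^ 2 = ph + 1 := by
  unfold ph; nlinarith [sqrt5_sq]

lemma ph_bounds : 1.618 < ph ∧ ph < 1.6181 := by
  unfold ph; constructor <;> nlinarith [sqrt5_lt.1, sqrt5_lt.2]

lemma ph_pos : 0 < ph := by nlinarith [ph_bounds.1]
lemma ph_gt_one : 1 < ph := by nlinarith [ph_bounds.1]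
lemma ph_lt_two : ph < 2 := by nlinarith [ph_bounds.2]
lemma ph_ne : ph ≠ 0 := ne_of_gt ph_pos

lemma ph_inv : ph⁻¹ = ph - 1 := by
  have h : (ph - 1) * ph = 1 := by nlinarith [ph_sq]
  exact inv_eq_of_mul_eq_one_right (by nlinarith [ph_sq])

lemma ph_irr : Irrational ph := by
  have h5 : Irrational (Real.sqrt 5) := (Nat.prime_five).irrational_sqrt
  have h1 : Irrational ((1:ℚ) + Real.sqrt 5) := h5.ratCast_add (q := 1)
  have h2 : Irrational (((1:ℚ) + Real.sqrt 5) / (2:ℚ)) := h1.div_ratCast (by norm_num)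
  convert h2 using 1
  unfold ph; push_cast; ring


noncomputable def ps : ℝ := -ph⁻¹

lemma ps_sq : ps ^ 2 = ps + 1 := by
  unfold ps; rw [ph_inv]; nlinarith [ph_sq]

lemma fib_ph (k : ℕ) : (Nat.fib k : ℝ) * ph = Nat.fib (k+1) - ps ^ k := by
  induction k using Nat.twoStepInduction with
  | zero => simp
  | one => simp [Nat.fib_one, Nat.fib_add_two]; unfold ps; rw [ph_inv]; push_cast; ring
  | more k ih1 ih2 =>
    have h1 : Nat.fib (k+2) = Nat.fib k + Nat.fib (k+1) := Nat.fib_add_two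
    have h2 : Nat.fib (k+3) = Nat.fib (k+1) + Nat.fib (k+2) := Nat.fib_add_two
    have hps : ps ^ (k+2) = ps ^ k + ps ^ (k+1) := by
      have : ps ^ (k+2) = ps ^ k * ps ^ 2 := by ring
      rw [this, ps_sq]; ring
    rw [h1]; push_cast
    rw [add_mul, ih1, ih2, h2, hps]; push_cast; ring

lemma ph_inv_pos : 0 < ph⁻¹ := inv_pos.2 ph_pos
lemma ph_inv_lt_one : ph⁻¹ < 1 := by rw [ph_inv]; linarith [ph_lt_two]

lemma ps_pow_odd (k : ℕ) (h : Odd k) : ps ^ k = -(ph⁻¹ ^ k) := by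
  unfold ps; rw [h.neg_pow]
lemma ps_pow_even (k : ℕ) (h : Even k) : ps ^ k = ph⁻¹ ^ k := by
  unfold ps; rw [h.neg_pow]

lemma fib_ph_odd (k : ℕ) (h : Odd k) : (Nat.fib k : ℝ) * ph = Nat.fib (k+1) + ph⁻¹ ^ k := by
  rw [fib_ph, ps_pow_odd k h]; ring
lemma fib_ph_even (k : ℕ) (h : Even k) : (Nat.fib k : ℝ) * ph = Nat.fib (k+1) - ph⁻¹ ^ k := by
  rw [fib_ph, ps_pow_even k h]

-- best approximation
lemma ph_inv_pow_le_one (k : ℕ) : ph⁻¹ ^ k ≤ 1 :=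
  pow_le_one₀ (le_of_lt ph_inv_pos) (le_of_lt ph_inv_lt_one)

lemma ph_inv_pow_pos (k : ℕ) : 0 < ph⁻¹ ^ k := pow_pos ph_inv_pos k

lemma ph_inv_pow_anti {a b : ℕ} (h : a ≤ b) : ph⁻¹ ^ b ≤ ph⁻¹ ^ a :=
  pow_le_pow_of_le_one (le_of_lt ph_inv_pos) (le_of_lt ph_inv_lt_one) h

lemma best_approx : ∀ n : ℕ, 2 ≤ n → ∀ p : ℕ, 0 < p → p < Nat.fib (n+1) →
    ∀ m : ℤ, ph⁻¹ ^ n ≤ |(p:ℝ) * ph - m| := by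
  intro n
  induction n with
  | zero => intro h; omega
  | succ n ih =>
    intro hn p hp hplt m
    rcases Nat.lt_or_ge n 2 with hn2 | hn2
    · -- base case n+1 = 2
      have hn1 : n = 1 := by omega
      subst hn1
      have hp1 : p = 1 := by
        have h3 : Nat.fib (1+1+1) = 2 := by decide
        omega
      subst hp1
      have hiv : ph⁻¹ ^ 2 = 2 - ph := by
        rw [ph_inv]; nlinarith [ph_sq]
      rw [hiv]
      push_cast
      rcases le_or_gt (m:ℝ) 1 with hm | hm
      · rw [abs_of_nonneg (by nlinarith [ph_gt_one])]
        nlinarith [ph_bounds.1, ph_bounds.2]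
      · have hm2 : (2:ℝ) ≤ (m:ℝ) := by
          have : (1:ℤ) < m := by exact_mod_cast hm
          exact_mod_cast this
        rw [abs_of_nonpos (by nlinarith [ph_lt_two])]
        nlinarith [ph_bounds.1, ph_bounds.2]
    · -- inductive step
      set p' : ℤ := m - p with hp'
      have key : (p:ℝ) * ph - m = ph⁻¹ * ((p:ℝ) - p' * ph) := by
        rw [ph_inv]; push_cast [hp']; linear_combination ((m:ℝ) - p) * ph_sq
      have habs : |(p:ℝ) * ph - m| = ph⁻¹ * |(p':ℝ) * ph - p| := by
        rw [key, abs_mul, abs_of_pos ph_inv_pos, abs_sub_comm]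
      have hpow : ph⁻¹ ^ (n+1) = ph⁻¹ * ph⁻¹ ^ n := by ring
      rcases le_or_gt p' 0 with hple | hpgt
      · -- p' ≤ 0 : inner value ≥ 1
        have h1 : (1:ℝ) ≤ (p:ℝ) := by exact_mod_cast hp
        have hpr : (p':ℝ) ≤ 0 := by exact_mod_cast hple
        have hbig : 1 ≤ |(p':ℝ) * ph - p| := by
          rw [abs_sub_comm, abs_of_nonneg (by nlinarith [ph_pos])]
          nlinarith [ph_pos]
        rw [habs, hpow]
        exact mul_le_mul_of_nonneg_left ((ph_inv_pow_le_one n).trans hbig)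
          (le_of_lt ph_inv_pos)
      · rcases lt_or_ge p' (Nat.fib (n+1)) with hplt' | hpge'
        · -- use IH on p'
          have hpn : 0 < p'.toNat := by omega
          have hpn2 : p'.toNat < Nat.fib (n+1) := by omega
          have hIH := ih hn2 p'.toNat hpn hpn2 (p : ℤ)
          have hc1 : ((p'.toNat : ℕ) : ℝ) = (p' : ℝ) := by
            have : ((p'.toNat : ℕ) : ℤ) = p' := Int.toNat_of_nonneg (by omega)
            exact_mod_cast this
          have hc2 : (((p:ℕ) : ℤ) : ℝ) = (p:ℝ) := by push_cast; rfl
          rw [hc1, hc2] at hIH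
          rw [habs, hpow]
          exact mul_le_mul_of_nonneg_left hIH (le_of_lt ph_inv_pos)
        · -- p' ≥ fib (n+1) : inner value ≥ 1 - ph⁻¹^(n+1)
          have hf : (Nat.fib (n+1) : ℝ) * ph = Nat.fib (n+2) - ps ^ (n+1) := fib_ph (n+1)
          have hps : |ps ^ (n+1)| = ph⁻¹ ^ (n+1) := by
            unfold ps
            rw [abs_pow, abs_neg, abs_of_pos ph_inv_pos]
          have hpr : (Nat.fib (n+1) : ℝ) ≤ (p':ℝ) := by exact_mod_cast hpge'
          have hpp : (p:ℝ) ≤ (Nat.fib (n+2) : ℝ) - 1 := by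
            have h1 : (p:ℤ) ≤ (Nat.fib (n+2) : ℤ) - 1 := by
              have he : Nat.fib (n+1+1) = Nat.fib (n+2) := by norm_num
              have : Nat.fib (n+2) = Nat.fib n + Nat.fib (n+1) := Nat.fib_add_two
              omega
            exact_mod_cast h1
          have hinner : 1 - ph⁻¹ ^ (n+1) ≤ (p':ℝ) * ph - p := by
            have h1 : (Nat.fib (n+1):ℝ) * ph ≤ (p':ℝ) * ph :=
              mul_le_mul_of_nonneg_right hpr (le_of_lt ph_pos)
            have h2 : ps ^ (n+1) ≤ ph⁻¹ ^ (n+1) := (le_abs_self _).trans_eq hps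
            linarith [h1, hf.ge, hf.le, hpp]
          have hn1 : 1 - ph⁻¹ ^ (n+1) ≥ ph⁻¹ ^ n := by
            have e1 : ph⁻¹ ^ n + ph⁻¹ ^ (n+1) ≤ ph⁻¹ + ph⁻¹ ^ 2 := by
              have := ph_inv_pow_anti (show 1 ≤ n by omega)
              have := ph_inv_pow_anti (show 2 ≤ n + 1 by omega)
              simp only [pow_one] at *
              linarith
            have e2 : ph⁻¹ + ph⁻¹ ^ 2 = 1 := by
              rw [ph_inv]; nlinarith [ph_sq]
            linarith
          have hinner2 : ph⁻¹ ^ n ≤ |(p':ℝ) * ph - p| := by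
            refine le_trans ?_ (le_abs_self _)
            linarith
          rw [habs, hpow]
          exact mul_le_mul_of_nonneg_left hinner2 (le_of_lt ph_inv_pos)

noncomputable def fr (j : ℕ) : ℝ := (j:ℝ) * ph - ⌊(j:ℝ) * ph⌋₊

lemma jph_nonneg (j : ℕ) : 0 ≤ (j:ℝ) * ph := mul_nonneg (Nat.cast_nonneg j) (le_of_lt ph_pos)

lemma fr_key (j K : ℕ) (x : ℝ) (h : (j:ℝ) * ph = K + x) (hx0 : 0 ≤ x) (hx1 : x < 1) :
    ⌊(j:ℝ) * ph⌋₊ = K ∧ fr j = x := by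
  have hfl : ⌊(j:ℝ) * ph⌋₊ = K := by
    rw [Nat.floor_eq_iff (jph_nonneg j)]
    constructor <;> [linarith ; linarith]
  exact ⟨hfl, by unfold fr; rw [hfl]; linarith⟩

lemma fr_spec (j : ℕ) : (j:ℝ) * ph = ⌊(j:ℝ) * ph⌋₊ + fr j := by unfold fr; ring

lemma fr_nonneg (j : ℕ) : 0 ≤ fr j := by
  unfold fr
  have := Nat.floor_le (jph_nonneg j)
  linarith

lemma fr_lt_one (j : ℕ) : fr j < 1 := by
  unfold fr
  have := Nat.lt_floor_add_one ((j:ℝ) * ph)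
  linarith

lemma fr_zero : fr 0 = 0 := by unfold fr; simp

lemma fr_pos (j : ℕ) (hj : 0 < j) : 0 < fr j := by
  rcases lt_or_eq_of_le (fr_nonneg j) with h | h
  · exact h
  · exfalso
    have : (j:ℝ) * ph = (⌊(j:ℝ) * ph⌋₊ : ℝ) := by have := fr_spec j; linarith
    have hirr : Irrational ((j:ℝ) * ph) := by
      exact ph_irr.natCast_mul (by omega)
    exact hirr.ne_nat _ this

lemma inv_sum (n : ℕ) : ph⁻¹ ^ (n+1) + ph⁻¹ ^ (n+2) = ph⁻¹ ^ n := by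
  have h1 : ph⁻¹ + ph⁻¹ ^ 2 = 1 := by rw [ph_inv]; nlinarith [ph_sq]
  calc ph⁻¹ ^ (n+1) + ph⁻¹ ^ (n+2) = ph⁻¹ ^ n * (ph⁻¹ + ph⁻¹ ^ 2) := by ring
    _ = ph⁻¹ ^ n := by rw [h1, mul_one]

lemma step_add (j a : ℕ) (ha : Odd a) (h : fr j + ph⁻¹ ^ a < 1) :
    fr (j + Nat.fib a) = fr j + ph⁻¹ ^ a := by
  have heq : ((j + Nat.fib a : ℕ):ℝ) * ph
      = (⌊(j:ℝ) * ph⌋₊ + Nat.fib (a+1) : ℕ) + (fr j + ph⁻¹ ^ a) := by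
    push_cast
    rw [add_mul, fib_ph_odd a ha]
    have := fr_spec j
    linarith
  exact (fr_key _ _ _ heq (by linarith [fr_nonneg j, ph_inv_pow_pos a]) h).2

lemma step_sub (j b : ℕ) (hb : Even b) (h : ph⁻¹ ^ b ≤ fr j) :
    fr (j + Nat.fib b) = fr j - ph⁻¹ ^ b := by
  have heq : ((j + Nat.fib b : ℕ):ℝ) * ph
      = (⌊(j:ℝ) * ph⌋₊ + Nat.fib (b+1) : ℕ) + (fr j - ph⁻¹ ^ b) := by
    push_cast
    rw [add_mul, fib_ph_even b hb]
    have := fr_spec j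
    linarith
  exact (fr_key _ _ _ heq (by linarith) (by linarith [fr_lt_one j, ph_inv_pow_pos b])).2

lemma parity_choice (n : ℕ) : ∃ a b : ℕ, Odd a ∧ Even b ∧
    (a = n+1 ∧ b = n+2 ∨ a = n+2 ∧ b = n+1) ∧ ph⁻¹ ^ a + ph⁻¹ ^ b = ph⁻¹ ^ n := by
  rcases Nat.even_or_odd n with he | ho
  · exact ⟨n+1, n+2, he.add_one, by simpa using he.add (by decide : Even 2),
      Or.inl ⟨rfl, rfl⟩, inv_sum n⟩
  · refine ⟨n+2, n+1, ?_, ho.add_one, Or.inr ⟨rfl, rfl⟩, by linarith [inv_sum n]⟩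
    rcases ho with ⟨k, hk⟩
    exact ⟨k+1, by omega⟩

lemma stepT' (n j : ℕ) (hn : 2 ≤ n) (h : fr j < ph⁻¹ ^ n) :
    ∃ t, 1 ≤ t ∧ t ≤ Nat.fib (n+2) ∧ fr (j + t) < ph⁻¹ ^ n := by
  obtain ⟨a, b, ha, hb, hab, hsum⟩ := parity_choice n
  rcases lt_or_ge (fr j + ph⁻¹ ^ a) (ph⁻¹ ^ n) with hc | hc
  · refine ⟨Nat.fib a, ?_, ?_, ?_⟩
    · have : 0 < a := by omega
      exact Nat.fib_pos.2 (by omega)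
    · exact Nat.fib_mono (by omega)
    · rw [step_add j a ha (by linarith [ph_inv_pow_le_one n])]
      exact hc
  · refine ⟨Nat.fib b, ?_, ?_, ?_⟩
    · exact Nat.fib_pos.2 (by omega)
    · exact Nat.fib_mono (by omega)
    · rw [step_sub j b hb (by linarith)]
      have := ph_inv_pow_pos b
      linarith

lemma stepT (n j : ℕ) (hn : 2 ≤ n) (h : 1 - ph⁻¹ ^ n ≤ fr j) :
    ∃ t, 1 ≤ t ∧ t ≤ Nat.fib (n+2) ∧ 1 - ph⁻¹ ^ n ≤ fr (j + t) := by
  obtain ⟨a, b, ha, hb, hab, hsum⟩ := parity_choice n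
  rcases le_or_gt (1 - ph⁻¹ ^ n + ph⁻¹ ^ b) (fr j) with hc | hc
  · refine ⟨Nat.fib b, Nat.fib_pos.2 (by omega), Nat.fib_mono (by omega), ?_⟩
    · rw [step_sub j b hb (by linarith [ph_inv_pow_le_one n])]
      linarith
  · refine ⟨Nat.fib a, Nat.fib_pos.2 (by omega), Nat.fib_mono (by omega), ?_⟩
    · rw [step_add j a ha (by linarith [ph_inv_pow_pos a])]
      linarith [ph_inv_pow_pos a]

lemma windowT' (n : ℕ) (hn : 2 ≤ n) (i : ℕ) :
    ∃ j, i ≤ j ∧ j ≤ i + Nat.fib (n+2) ∧ fr j < ph⁻¹ ^ n := by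
  induction i with
  | zero => exact ⟨0, le_refl 0, Nat.zero_le _, by rw [fr_zero]; exact ph_inv_pow_pos n⟩
  | succ i ih =>
    obtain ⟨j, hij, hjF, hfr⟩ := ih
    rcases Nat.lt_or_ge i j with hlt | hge
    · exact ⟨j, hlt, by omega, hfr⟩
    · have hji : j = i := le_antisymm hge hij
      subst hji
      obtain ⟨t, ht1, htF, hfr'⟩ := stepT' n j hn hfr
      exact ⟨j + t, by omega, by omega, hfr'⟩

lemma windowT (n : ℕ) (hn : 2 ≤ n) (i : ℕ) :
    ∃ j, i ≤ j ∧ j ≤ i + Nat.fib (n+2) ∧ 1 - ph⁻¹ ^ n ≤ fr j := by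
  induction i with
  | zero =>
    rcases Nat.even_or_odd n with he | ho
    · refine ⟨Nat.fib n, Nat.zero_le _, by simpa using Nat.fib_mono (by omega : n ≤ n+2), ?_⟩
      have heq : ((Nat.fib n : ℕ):ℝ) * ph
          = ((Nat.fib (n+1) - 1 : ℕ):ℝ) + (1 - ph⁻¹ ^ n) := by
        have h1 : 1 ≤ Nat.fib (n+1) := Nat.fib_pos.2 (by omega)
        push_cast [h1]
        rw [fib_ph_even n he]
        ring
      have := (fr_key _ _ _ heq (by linarith [ph_inv_pow_le_one n]) (by linarith [ph_inv_pow_pos n])).2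
      rw [this]
    · refine ⟨Nat.fib (n+1), Nat.zero_le _, by simpa using Nat.fib_mono (by omega : n+1 ≤ n+2), ?_⟩
      have he1 : Even (n+1) := ho.add_one
      have heq : ((Nat.fib (n+1) : ℕ):ℝ) * ph
          = ((Nat.fib (n+2) - 1 : ℕ):ℝ) + (1 - ph⁻¹ ^ (n+1)) := by
        have h1 : 1 ≤ Nat.fib (n+2) := Nat.fib_pos.2 (by omega)
        push_cast [h1]
        rw [fib_ph_even (n+1) he1]
        ring
      have := (fr_key _ _ _ heq (by linarith [ph_inv_pow_le_one (n+1)]) (by linarith [ph_inv_pow_pos (n+1)])).2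
      rw [this]
      linarith [ph_inv_pow_anti (show n ≤ n+1 by omega)]
  | succ i ih =>
    obtain ⟨j, hij, hjF, hfr⟩ := ih
    rcases Nat.lt_or_ge i j with hlt | hge
    · exact ⟨j, hlt, by omega, hfr⟩
    · have hji : j = i := le_antisymm hge hij
      subst hji
      obtain ⟨t, ht1, htF, hfr'⟩ := stepT n j hn hfr
      exact ⟨j + t, by omega, by omega, hfr'⟩

noncomputable def Fl (j : ℕ) : ℕ := ⌊(j:ℝ) * ph⌋₊

lemma Fl_eq (j K : ℕ) (h1 : (K:ℝ) ≤ j*ph) (h2 : (j:ℝ)*ph < K+1) : Fl j = K :=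
  (Nat.floor_eq_iff (jph_nonneg j)).2 ⟨h1, h2⟩

lemma Fl_lb (j : ℕ) : (Fl j : ℝ) ≤ j * ph := Nat.floor_le (jph_nonneg j)
lemma Fl_ub (j : ℕ) : (j:ℝ) * ph < Fl j + 1 := Nat.lt_floor_add_one _
lemma Fl_lt (j : ℕ) (hj : 0 < j) : (Fl j : ℝ) < j * ph := by
  have := fr_pos j hj; unfold fr at this; unfold Fl; linarith

lemma Fl_one : Fl 1 = 1 := Fl_eq 1 1 (by push_cast; linarith [ph_gt_one]) (by push_cast; linarith [ph_lt_two])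

lemma diffFl (k : ℕ) : Fl (k+1) = Fl k + 1 ∨ Fl (k+1) = Fl k + 2 := by
  have hs : ((k+1:ℕ):ℝ) * ph = (k:ℝ)*ph + ph := by push_cast; ring
  have h1 := Fl_lb k
  have h2 := Fl_ub k
  rcases lt_or_ge ((k:ℝ)*ph + ph) ((Fl k : ℝ) + 2) with hc | hc
  · left
    apply Fl_eq
    · push_cast; nlinarith [ph_gt_one]
    · push_cast; linarith
  · right
    apply Fl_eq
    · push_cast; linarith
    · push_cast; nlinarith [ph_lt_two]

-- bounds on (Fl N) * ph
lemma mph_ub (N : ℕ) (hN : 0 < N) : (Fl N : ℝ) * ph < Fl N + N := by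
  have h1 : (Fl N : ℝ) < N * ph := Fl_lt N hN
  have hph1 : (0:ℝ) < ph - 1 := by linarith [ph_gt_one]
  have hint := mul_lt_mul_of_pos_right h1 hph1
  have eN : (N:ℝ)*ph*ph = N*ph + N := by
    rw [show (N:ℝ)*ph*ph = N*(ph^2) by ring, ph_sq]; ring
  nlinarith
lemma mph_lb (N : ℕ) (hN : 0 < N) : (Fl N : ℝ) + N + 1 - ph < (Fl N : ℝ) * ph := by
  have h2 : (N:ℝ) * ph < Fl N + 1 := Fl_ub N
  have hph1 : (0:ℝ) < ph - 1 := by linarith [ph_gt_one]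
  have hint := mul_lt_mul_of_pos_right h2 hph1
  have eN : (N:ℝ)*ph*ph = N*ph + N := by
    rw [show (N:ℝ)*ph*ph = N*(ph^2) by ring, ph_sq]; ring
  nlinarith

lemma I1 (k : ℕ) : Fl (Fl (k+1)) = Fl (k+1) + k := by
  have hu := mph_ub (k+1) (by omega)
  have hl := mph_lb (k+1) (by omega)
  push_cast at hu hl
  apply Fl_eq <;> push_cast <;> [linarith [ph_lt_two] ; linarith]

lemma I2 (k : ℕ) : Fl (Fl (k+1) + 1) = Fl (k+1) + k + 2 := by
  have hu := mph_ub (k+1) (by omega)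
  have hl := mph_lb (k+1) (by omega)
  push_cast at hu hl
  apply Fl_eq <;> push_cast <;> [linarith ; linarith [ph_lt_two]]

lemma I3 (k : ℕ) (h : (Fl (k+1) : ℝ) + 2 - ph ≤ ((k:ℝ)+1) * ph) :
    Fl (Fl (k+1) + 2) = Fl (k+1) + k + 3 := by
  have hu := mph_ub (k+1) (by omega)
  have hl := mph_lb (k+1) (by omega)
  push_cast at hu hl
  -- strict version of h
  have hne : ((k+2:ℕ):ℝ) * ph ≠ ((Fl (k+1) + 2 : ℕ):ℝ) := by
    intro hc
    have hp := fr_pos (k+2) (by omega)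
    have hfl : Fl (k+2) = Fl (k+1) + 2 := by
      apply Fl_eq
      · push_cast at hc ⊢; linarith
      · push_cast at hc ⊢; linarith
    have hspF : ((k+2:ℕ):ℝ)*ph = (Fl (k+2):ℝ) + fr (k+2) := fr_spec (k+2)
    rw [hfl] at hspF
    push_cast at hspF hc
    linarith
  have hstrict : (Fl (k+1) : ℝ) + 2 - ph < ((k:ℝ)+1) * ph := by
    rcases lt_or_eq_of_le h with h' | h'
    · exact h'
    · exfalso; apply hne; push_cast; linarith
  have hph1 : (0:ℝ) < ph - 1 := by linarith [ph_gt_one]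
  -- m < (k+1)ph + ph - 2
  have hm2 : (Fl (k+1) : ℝ) < ((k:ℝ)+1)*ph + ph - 2 := by linarith
  have hint := mul_lt_mul_of_pos_right hm2 hph1
  have eN : ((k:ℝ)+1)*ph*ph = ((k:ℝ)+1)*ph + ((k:ℝ)+1) := by
    rw [show ((k:ℝ)+1)*ph*ph = ((k:ℝ)+1)*(ph^2) by ring, ph_sq]; ring
  have eP : ph*ph = ph + 1 := by rw [show ph*ph = ph^2 by ring, ph_sq]
  apply Fl_eq
  · push_cast; linarith [ph_gt_one]
  · push_cast; nlinarith

lemma I4 (k : ℕ) (h : ((k:ℝ)+1) * ph < (Fl (k+1) : ℝ) + 2 - ph) :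
    Fl (Fl (k+1) + 2) = Fl (k+1) + k + 4 := by
  have hu := mph_ub (k+1) (by omega)
  have hl := mph_lb (k+1) (by omega)
  push_cast at hu hl
  have hph1 : (0:ℝ) < ph - 1 := by linarith [ph_gt_one]
  have hm2 : ((k:ℝ)+1)*ph + ph - 2 < (Fl (k+1) : ℝ) := by linarith
  have hint := mul_lt_mul_of_pos_right hm2 hph1
  have eN : ((k:ℝ)+1)*ph*ph = ((k:ℝ)+1)*ph + ((k:ℝ)+1) := by
    rw [show ((k:ℝ)+1)*ph*ph = ((k:ℝ)+1)*(ph^2) by ring, ph_sq]; ring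
  have eP : ph*ph = ph + 1 := by rw [show ph*ph = ph^2 by ring, ph_sq]
  apply Fl_eq
  · push_cast; nlinarith
  · push_cast; linarith [ph_lt_two]

-- the Beatty word
noncomputable def BW (n : ℕ) : Bool := decide (Fl (n+2) = Fl (n+1) + 1)

def cntF (x : ℕ → Bool) (k : ℕ) : ℕ := (List.range k).countP (fun m => !x m)

def SS (x : ℕ → Bool) (k : ℕ) : ℕ := k + cntF x k

lemma cntF_succ (x : ℕ → Bool) (k : ℕ) :
    cntF x (k+1) = cntF x k + (if x k then 0 else 1) := by
  unfold cntF
  rw [List.range_succ, List.countP_append]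
  cases h : x k <;> simp [h]

lemma SS_zero (x : ℕ → Bool) : SS x 0 = 0 := by unfold SS cntF; simp

lemma SS_succ (x : ℕ → Bool) (k : ℕ) :
    SS x (k+1) = SS x k + (if x k then 1 else 2) := by
  unfold SS
  rw [cntF_succ]
  cases h : x k <;> simp [h] <;> omega

lemma le_SS (x : ℕ → Bool) (k : ℕ) : k ≤ SS x k := Nat.le_add_right _ _

lemma SS_exists (x : ℕ → Bool) (n : ℕ) : ∃ k, SS x k ≤ n ∧ n < SS x (k+1) := by
  induction n with
  | zero =>
    refine ⟨0, le_of_eq (SS_zero x), ?_⟩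
    rw [SS_succ, SS_zero]
    cases h : x 0 <;> simp [h]
  | succ n ih =>
    obtain ⟨k, h1, h2⟩ := ih
    rcases Nat.lt_or_ge (n+1) (SS x (k+1)) with hc | hc
    · exact ⟨k, by omega, hc⟩
    · refine ⟨k+1, hc, ?_⟩
      rw [SS_succ x (k+1)]
      cases h : x (k+1) <;> simp [h] <;> omega

def SigFix (x : ℕ → Bool) : Prop :=
  x 0 = false ∧ ∀ k, x (SS x k) = false ∧ x (SS x k + 1) = !x k

lemma sigfix_uniq {x y : ℕ → Bool} (hx : SigFix x) (hy : SigFix y) : ∀ n, x n = y n := by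
  intro n
  induction n using Nat.strong_induction_on with
  | _ n ih =>
    rcases Nat.eq_zero_or_pos n with h0 | hpos
    · subst h0; rw [hx.1, hy.1]
    · obtain ⟨k, h1, h2⟩ := SS_exists x n
      have hcnt : cntF x k = cntF y k := by
        unfold cntF
        apply List.countP_congr
        intro a ha
        have halt : a < k := List.mem_range.1 ha
        have han : a < n := by
          have := le_SS x k
          omega
        rw [ih a han]
      have hSeq : SS x k = SS y k := by unfold SS; rw [hcnt]
      rcases eq_or_lt_of_le h1 with heq | hlt
      · rw [← heq, (hx.2 k).1, hSeq, (hy.2 k).1]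
      · have hn1 : n = SS x k + 1 := by
          have := SS_succ x k
          cases h : x k <;> rw [h] at this <;> simp at this <;> omega
        have hkn : k < n := by have := le_SS x k; omega
        have hxy : x k = y k := ih k hkn
        rw [hn1, (hx.2 k).2, hSeq, (hy.2 k).2, hxy]

lemma cntBW (k : ℕ) : k + 1 + cntF BW k = Fl (k+1) := by
  induction k with
  | zero => unfold cntF; simp [Fl_one]
  | succ k ih =>
    rw [cntF_succ, (show k+1+1 = k+2 from rfl)]
    have hd := diffFl (k+1)
    rw [(show k+1+1 = k+2 from rfl)] at hd
    rcases hd with hd | hd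
    · have hBk : BW k = true := by unfold BW; simp [hd]
      rw [hBk]
      simp
      omega
    · have hBk : BW k = false := by
        unfold BW
        rw [decide_eq_false_iff_not]
        omega
      rw [hBk]
      simp
      omega

lemma SS_BW (k : ℕ) : SS BW k + 1 = Fl (k+1) := by
  unfold SS
  have := cntBW k
  omega

lemma Fl_pos (n : ℕ) (hn : 0 < n) : 0 < Fl n := by
  have h : (1:ℝ) ≤ (n:ℝ) * ph := by
    have h1 : (1:ℝ) ≤ (n:ℝ) := by exact_mod_cast hn
    nlinarith [ph_gt_one]
  exact Nat.le_floor (by exact_mod_cast h)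

lemma BW_fix : SigFix BW := by
  constructor
  · unfold BW
    have h2 : Fl 2 = 3 := by
      apply Fl_eq <;> push_cast <;> [nlinarith [ph_bounds.1]; nlinarith [ph_bounds.2]]
    rw [(show (0:ℕ)+2 = 2 from rfl), (show (0:ℕ)+1 = 1 from rfl), h2, Fl_one]
    rfl
  · intro k
    have hmpos : 0 < Fl (k+1) := Fl_pos (k+1) (by omega)
    have hS : SS BW k = Fl (k+1) - 1 := by have := SS_BW k; omega
    constructor
    · rw [hS]
      unfold BW
      rw [(show Fl (k+1) - 1 + 2 = Fl (k+1) + 1 by omega),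
          (show Fl (k+1) - 1 + 1 = Fl (k+1) by omega), I2 k, I1 k,
          decide_eq_false_iff_not]
      omega
    · rw [hS, (show Fl (k+1) - 1 + 1 = Fl (k+1) by omega)]
      have hd := diffFl (k+1)
      rw [(show k+1+1 = k+2 from rfl)] at hd
      rcases hd with hd | hd
      · -- BW k = true; BW (Fl (k+1)) = false via I4
        have hI4 : Fl (Fl (k+1) + 2) = Fl (k+1) + k + 4 := by
          apply I4 k
          have hub := Fl_ub (k+2)
          rw [hd] at hub
          push_cast at hub ⊢
          linarith
        unfold BW
        rw [(show Fl (k+1) + 1 + 1 = Fl (k+1) + 2 from rfl), hI4, I2 k]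
        have e1 : decide (Fl (k+1) + k + 4 = Fl (k+1) + k + 2 + 1) = false := by
          rw [decide_eq_false_iff_not]; omega
        have e2 : decide (Fl (k+2) = Fl (k+1) + 1) = true := by
          rw [decide_eq_true_eq]; exact hd
        rw [e1, e2]
        rfl
      · -- BW k = false; BW (Fl (k+1)) = true via I3
        have hI3 : Fl (Fl (k+1) + 2) = Fl (k+1) + k + 3 := by
          apply I3 k
          have hlb := Fl_lb (k+2)
          rw [hd] at hlb
          push_cast at hlb ⊢
          linarith
        unfold BW
        rw [(show Fl (k+1) + 1 + 1 = Fl (k+1) + 2 from rfl), hI3, I2 k]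
        have e1 : decide (Fl (k+1) + k + 3 = Fl (k+1) + k + 2 + 1) = true := by
          rw [decide_eq_true_eq]
        have e2 : decide (Fl (k+2) = Fl (k+1) + 1) = false := by
          rw [decide_eq_false_iff_not]; omega
        rw [e1, e2]
        rfl

-- structure of fibIter
lemma fibIter_add_two (n : ℕ) : fibIter (n+2) = fibIter (n+1) ++ fibIter n := by
  induction n with
  | zero => rfl
  | succ n ih =>
    show (fibIter (n+2)).flatMap fibMorph = (fibIter (n+1)).flatMap fibMorph ++ fibIter (n+1)
    rw [ih, List.flatMap_append]
    rfl

lemma fibIter_prefix (n : ℕ) : fibIter n <+: fibIter (n+1) := by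
  cases n with
  | zero => exact ⟨[true], rfl⟩
  | succ n => exact ⟨fibIter n, (fibIter_add_two n).symm⟩

lemma fibIter_prefix_le {n m : ℕ} (h : n ≤ m) : fibIter n <+: fibIter m := by
  induction m with
  | zero => rw [Nat.le_zero.1 h]
  | succ m ih =>
    rcases Nat.lt_or_ge n (m+1) with hc | hc
    · exact (ih (by omega)).trans (fibIter_prefix m)
    · rw [(by omega : n = m + 1)]

lemma fibIter_len (n : ℕ) : n + 1 ≤ (fibIter n).length := by
  induction n using Nat.twoStepInduction with
  | zero => decide
  | one => decide
  | more n ih1 ih2 =>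
    rw [fibIter_add_two n, List.length_append]
    omega

lemma prefix_getD {u v : List Bool} (h : u <+: v) {n : ℕ} (hn : n < u.length) :
    u.getD n false = v.getD n false := by
  obtain ⟨t, rfl⟩ := h
  rw [List.getD_eq_getElem?_getD, List.getD_eq_getElem?_getD, List.getElem?_append_left hn]

lemma fibWord_eq (m n : ℕ) (h : n < (fibIter m).length) :
    fibWord n = (fibIter m).getD n false := by
  unfold fibWord
  rcases Nat.le_total (n+1) m with hc | hc
  · exact prefix_getD (fibIter_prefix_le hc) (by have := fibIter_len (n+1); omega)
  · exact (prefix_getD (fibIter_prefix_le hc) h).symm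

-- flatMap machinery
lemma flat_len (u : List Bool) :
    (u.flatMap fibMorph).length = u.length + u.countP (fun c => !c) := by
  induction u with
  | nil => rfl
  | cons b t ih =>
    rw [List.flatMap_cons, List.length_append, ih, List.countP_cons]
    cases b <;> simp [fibMorph] <;> omega

lemma head_flat (v : List Bool) (hv : v ≠ []) :
    (v.flatMap fibMorph)[0]? = some false := by
  cases v with
  | nil => simp at hv
  | cons b t => cases b <;> simp [fibMorph]

lemma flat_decomp (u : List Bool) (k : ℕ) (hk : k < u.length) :
    u.flatMap fibMorph = (u.take k).flatMap fibMorph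
      ++ (fibMorph u[k] ++ (u.drop (k+1)).flatMap fibMorph) := by
  conv_lhs => rw [← List.take_append_drop k u]
  rw [List.flatMap_append]
  congr 1
  rw [List.drop_eq_getElem_cons hk, List.flatMap_cons]

lemma off_len (u : List Bool) (k : ℕ) (hk : k ≤ u.length) :
    ((u.take k).flatMap fibMorph).length = k + (u.take k).countP (fun c => !c) := by
  rw [flat_len, List.length_take, Nat.min_eq_left hk]

lemma block0 (u : List Bool) (k : ℕ) (hk : k < u.length) :
    (u.flatMap fibMorph)[k + (u.take k).countP (fun c => !c)]? = some false := by
  rw [flat_decomp u k hk, List.getElem?_append_right (by rw [off_len u k (le_of_lt hk)]),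
      off_len u k (le_of_lt hk), Nat.sub_self]
  cases h : u[k] <;> simp [fibMorph]

lemma block1_false (u : List Bool) (k : ℕ) (hk : k < u.length) (hf : u[k] = false) :
    (u.flatMap fibMorph)[k + (u.take k).countP (fun c => !c) + 1]? = some true := by
  rw [flat_decomp u k hk,
      List.getElem?_append_right (by rw [off_len u k (le_of_lt hk)]; omega),
      off_len u k (le_of_lt hk), hf]
  simp [fibMorph]

lemma block1_true (u : List Bool) (k : ℕ) (hk1 : k + 1 < u.length) (ht : u[k] = true) :
    (u.flatMap fibMorph)[k + (u.take k).countP (fun c => !c) + 1]? = some false := by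
  have hk : k < u.length := by omega
  rw [flat_decomp u k hk,
      List.getElem?_append_right (by rw [off_len u k (le_of_lt hk)]; omega),
      off_len u k (le_of_lt hk), ht]
  have h1 : (fibMorph true ++ (u.drop (k+1)).flatMap fibMorph)[1]?
      = ((u.drop (k+1)).flatMap fibMorph)[0]? := by
    simp [fibMorph]
  have e : k + (u.take k).countP (fun c => !c) + 1 - (k + (u.take k).countP (fun c => !c)) = 1 := by omega
  rw [e, h1, head_flat]
  intro hc
  have := List.drop_eq_nil_iff.1 hc
  omega

lemma fibWord_getElem (M k : ℕ) (h : k < (fibIter M).length) :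
    (fibIter M)[k] = fibWord k := by
  rw [fibWord_eq M k h, List.getD_eq_getElem?_getD, List.getElem?_eq_getElem h]
  rfl

lemma cnt_take (M k : ℕ) (h : k ≤ (fibIter M).length) :
    cntF fibWord k = ((fibIter M).take k).countP (fun c => !c) := by
  induction k with
  | zero => rfl
  | succ k ih =>
    have hk : k < (fibIter M).length := by omega
    rw [cntF_succ, ih (by omega), List.take_succ, List.countP_append,
        List.getElem?_eq_getElem hk]
    have : (fibIter M)[k] = fibWord k := fibWord_getElem M k hk
    cases hw : fibWord k <;> rw [this, hw] <;> simp

lemma fib_fix : SigFix fibWord := by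
  constructor
  · rfl
  · intro k
    have hlen : k + 2 ≤ (fibIter (k+1)).length := fibIter_len (k+1)
    have hcnt : cntF fibWord k = ((fibIter (k+1)).take k).countP (fun c => !c) :=
      cnt_take (k+1) k (by omega)
    have hSS : SS fibWord k = k + ((fibIter (k+1)).take k).countP (fun c => !c) := by
      unfold SS; rw [hcnt]
    have hflat : fibIter (k+2) = (fibIter (k+1)).flatMap fibMorph := rfl
    have hcle : ((fibIter (k+1)).take k).countP (fun c => !c)
        ≤ (fibIter (k+1)).countP (fun c => !c) :=
      (List.take_sublist k _).countP_le
    have hlen2 : (fibIter (k+2)).length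
        = (fibIter (k+1)).length + (fibIter (k+1)).countP (fun c => !c) := by
      rw [hflat, flat_len]
    constructor
    · rw [hSS, fibWord_eq (k+2) _ (by omega), List.getD_eq_getElem?_getD, hflat,
          block0 (fibIter (k+1)) k (by omega)]
      rfl
    · rw [hSS, fibWord_eq (k+2) _ (by omega), List.getD_eq_getElem?_getD, hflat]
      cases hw : fibWord k with
      | false =>
        rw [block1_false (fibIter (k+1)) k (by omega)
            (by rw [fibWord_getElem (k+1) k (by omega)]; exact hw)]
        rfl
      | true =>
        rw [block1_true (fibIter (k+1)) k (by omega)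
            (by rw [fibWord_getElem (k+1) k (by omega)]; exact hw)]
        rfl


lemma fibWord_eq_BW : ∀ n, fibWord n = BW n := sigfix_uniq fib_fix BW_fix

-- fr of p bounds via best approximation
lemma frF_spec (p : ℕ) : (p:ℝ) * ph = (Fl p : ℝ) + fr p := fr_spec p

lemma frp_lb (n p : ℕ) (hn : 2 ≤ n) (hp : 0 < p) (hplt : p < Nat.fib (n+1)) :
    ph⁻¹ ^ n ≤ fr p := by
  have h := best_approx n hn p hp hplt (Fl p : ℤ)
  have hs := frF_spec p
  push_cast at h
  rw [abs_of_nonneg (by linarith [fr_nonneg p])] at h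
  linarith

lemma frp_ub (n p : ℕ) (hn : 2 ≤ n) (hp : 0 < p) (hplt : p < Nat.fib (n+1)) :
    fr p ≤ 1 - ph⁻¹ ^ n := by
  have h := best_approx n hn p hp hplt ((Fl p : ℤ) + 1)
  have hs := frF_spec p
  push_cast at h
  rw [abs_of_nonpos (by linarith [fr_lt_one p])] at h
  linarith

-- floor addition lemmas
lemma L1 (j p : ℕ) (h : fr j + fr p < 1) : Fl (j + p) = Fl j + Fl p := by
  have h1 := fr_spec j
  have h2 := fr_spec p
  apply Fl_eq <;> push_cast <;> unfold Fl at * <;>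
    [nlinarith [fr_nonneg j, fr_nonneg p]; nlinarith]

lemma L2 (j p : ℕ) (h : 1 ≤ fr j + fr p) : Fl (j + p) = Fl j + Fl p + 1 := by
  have h1 := fr_spec j
  have h2 := fr_spec p
  apply Fl_eq <;> push_cast <;> unfold Fl at * <;>
    [nlinarith; nlinarith [fr_lt_one j, fr_lt_one p]]

-- existence of the fib interval
lemma fib_interval (p : ℕ) (hp : 1 ≤ p) : ∃ n, 2 ≤ n ∧ Nat.fib n ≤ p ∧ p < Nat.fib (n+1) := by
  induction p with
  | zero => omega
  | succ p ih =>
    rcases Nat.eq_zero_or_pos p with h0 | hpos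
    · subst h0
      exact ⟨2, le_refl 2, by decide, by decide⟩
    · obtain ⟨n, hn2, hnl, hnu⟩ := ih hpos
      rcases Nat.lt_or_ge (p+1) (Nat.fib (n+1)) with hc | hc
      · exact ⟨n, hn2, by omega, hc⟩
      · refine ⟨n+1, by omega, by omega, ?_⟩
        have h1 : 0 < Nat.fib n := Nat.fib_pos.2 (by omega)
        have h2 : Nat.fib (n+2) = Nat.fib n + Nat.fib (n+1) := Nat.fib_add_two
        have h3 : Nat.fib (n+1+1) = Nat.fib (n+2) := rfl
        omega

theorem stmt19 :
    ¬ ∃ (w : List Bool) (p : ℕ), FactorOf w fibWord ∧ 1 ≤ p ∧ HasPeriodL w p ∧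
      ⌈((5 + Real.sqrt 5) / 2) * (p : ℝ)⌉₊ ≤ w.length := by
  rintro ⟨w, p, ⟨i, hw⟩, hp, hper, hlen⟩
  set l := w.length with hl
  -- β p = ph^2 * p + p
  have hβ : ((5 + Real.sqrt 5) / 2) * (p:ℝ) = ph^2 * p + p := by
    rw [ph_sq]
    unfold ph
    ring
  have hceil : ⌈((5 + Real.sqrt 5) / 2) * (p : ℝ)⌉₊ = ⌈ph^2 * (p:ℝ)⌉₊ + p := by
    rw [hβ, Nat.ceil_add_natCast (by positivity)]
  set N := ⌈ph^2 * (p:ℝ)⌉₊ with hN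
  have hlN : N + p ≤ l := by rw [← hceil]; exact hlen
  -- choose n
  obtain ⟨n, hn2, hfl, hfu⟩ := fib_interval p hp
  -- N ≥ fib (n+2)
  have hNfib : Nat.fib (n+2) ≤ N := by
    have hval : (Nat.fib (n+2) : ℝ) - 1 < ph^2 * p := by
      have hsum : (Nat.fib (n+2) : ℝ) = Nat.fib n + Nat.fib (n+1) := by
        rw [Nat.fib_add_two]; push_cast; ring
      have hple : (Nat.fib n : ℝ) ≤ p := by exact_mod_cast hfl
      have hsq : ph^2 * (Nat.fib n : ℝ) = (Nat.fib n : ℝ) * ph + Nat.fib n := by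
        nlinarith [ph_sq]
      have hmono : ph^2 * (Nat.fib n : ℝ) ≤ ph^2 * p := by
        apply mul_le_mul_of_nonneg_left hple
        positivity
      rcases Nat.even_or_odd n with he | ho
      · have := fib_ph_even n he
        have hlt : ph⁻¹ ^ n < 1 := by
          calc ph⁻¹ ^ n ≤ ph⁻¹ ^ 1 := by
                apply pow_le_pow_of_le_one (le_of_lt ph_inv_pos) (le_of_lt ph_inv_lt_one) (by omega)
            _ < 1 := by simpa using ph_inv_lt_one
        nlinarith
      · have := fib_ph_odd n ho
        nlinarith [ph_inv_pow_pos n]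
    obtain ⟨q, hq⟩ : ∃ q, Nat.fib (n+2) = q + 1 :=
      ⟨Nat.fib (n+2) - 1, by have := Nat.fib_pos.2 (show 0 < n+2 by omega); omega⟩
    have : q < N := by
      rw [hN, Nat.lt_ceil]
      have : (q:ℝ) = (Nat.fib (n+2) : ℝ) - 1 := by rw [hq]; push_cast; ring
      rw [this]
      exact hval
    omega
  -- periodicity of fibWord on the factor
  have hfw : ∀ t, t < l - p → fibWord (i + t) = fibWord (i + t + p) := by
    intro t ht
    have h1 : t + p < l := by omega
    have h2 := hper t h1
    have hv : ∀ s, s < l → w[s]? = some (fibWord (i + s)) := by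
      intro s hs
      rw [hw, List.getElem?_map, List.getElem?_range hs]
      rfl
    rw [hv t (by omega), hv (t+p) h1] at h2
    have := Option.some.inj h2
    rw [this]
    ring_nf
  -- translate to BW and floors: increments agree
  have hE : ∀ t, t < l - p →
      Fl (i+t+2) + Fl (i+t+p+1) = Fl (i+t+1) + Fl (i+t+p+2) := by
    intro t ht
    have h := hfw t ht
    rw [fibWord_eq_BW, fibWord_eq_BW] at h
    unfold BW at h
    have d1 := diffFl (i+t+1)
    have d2 := diffFl (i+t+p+1)
    rw [(show i+t+1+1 = i+t+2 from rfl)] at d1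
    rw [(show i+t+p+1+1 = i+t+p+2 from rfl)] at d2
    have h' := decide_eq_decide.1 h
    rcases d1 with d1 | d1 <;> rcases d2 with d2 | d2
    · omega
    · have := h'.1 d1; omega
    · have := h'.2 d2; omega
    · omega
  -- constancy
  have hC : ∀ t, t ≤ l - p →
      Fl (i+1+t+p) + Fl (i+1) = Fl (i+1+t) + Fl (i+1+p) := by
    intro t
    induction t with
    | zero =>
      intro _
      rw [(show i+1+0+p = i+1+p from rfl), (show i+1+0 = i+1 from rfl)]
      omega
    | succ t ih =>
      intro ht
      have hc := ih (by omega)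
      have he := hE t (by omega)
      have e1 : i+1+(t+1)+p = i+t+p+2 := by ring
      have e2 : i+1+(t+1) = i+t+2 := by ring
      have e3 : i+1+t+p = i+t+p+1 := by ring
      have e4 : i+1+t = i+t+1 := by ring
      rw [e1, e2]
      rw [e3, e4] at hc
      omega
  -- the two hits
  obtain ⟨j1, hj1a, hj1b, hj1fr⟩ := windowT' n hn2 (i+1)
  obtain ⟨j2, hj2a, hj2b, hj2fr⟩ := windowT n hn2 (i+1)
  have hfrl := frp_lb n p hn2 (by omega) hfu
  have hfru := frp_ub n p hn2 (by omega) hfu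
  obtain ⟨t1, ht1⟩ : ∃ t1, j1 = i+1+t1 := ⟨j1 - (i+1), by omega⟩
  obtain ⟨t2, ht2⟩ : ∃ t2, j2 = i+1+t2 := ⟨j2 - (i+1), by omega⟩
  have ht1le : t1 ≤ l - p := by
    have : Nat.fib (n+2) ≤ N := hNfib
    omega
  have ht2le : t2 ≤ l - p := by omega
  have hL1 : Fl (j1 + p) = Fl j1 + Fl p := L1 j1 p (by linarith)
  have hL2 : Fl (j2 + p) = Fl j2 + Fl p + 1 := L2 j2 p (by linarith)
  have hC1 := hC t1 ht1le
  have hC2 := hC t2 ht2le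
  rw [(show i+1+t1+p = j1 + p by omega), (show i+1+t1 = j1 by omega)] at hC1
  rw [(show i+1+t2+p = j2 + p by omega), (show i+1+t2 = j2 by omega)] at hC2
  omega
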